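/- For all real z, the identity 2·Γ((1−iz)/2)/Γ(−iz/2) · Γ((iz+3)/2)/Γ((iz+2)/2) = (z − i)·tanh(πz/2) holds, where Γ is the complex Gamma function and i is the imaginary unit (with both sides interpreted as complex numbers, and the left side extended by continuity at z = 0 where it equals 0). -/

import Mathlib

open Complex Filter

/-- Left-hand side: ratio of Gamma functions. -/
noncomputable def gammaSide (z : ℝ) : ℂ :=
  2 * (Complex.Gamma ((1 - Complex.I * z) / 2) / Complex.Gamma (-(Complex.I * z) / 2)) *
    (Complex.Gamma ((Complex.I * z + 3) / 2) / Complex.Gamma ((Complex.I * z + 2) / 2))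

lemma gammaSide_zero : gammaSide 0 = 0 := by
  simp [gammaSide, Complex.Gamma_zero]

lemma gammaSide_contAt : ContinuousAt gammaSide 0 := by
  have h1 : ContinuousAt (fun z : ℝ => Complex.Gamma ((1 - Complex.I * z) / 2)) 0 := by
    apply (Complex.differentiableAt_Gamma _ ?_).continuousAt.comp
    · fun_prop
    · intro m
      simp only [Complex.ofReal_zero, mul_zero, sub_zero]
      intro h
      have := congrArg Complex.re h
      simp at this
      try { have hm : (m : ℝ) ≥ 0 := Nat.cast_nonneg m; nlinarith [this] }
  have h2 : ContinuousAt (fun z : ℝ => (Complex.Gamma (-(Complex.I * z) / 2))⁻¹) 0 := by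
    apply (Complex.differentiable_one_div_Gamma _).continuousAt.comp
    fun_prop
  have h3 : ContinuousAt (fun z : ℝ => Complex.Gamma ((Complex.I * z + 3) / 2)) 0 := by
    apply (Complex.differentiableAt_Gamma _ ?_).continuousAt.comp
    · fun_prop
    · intro m
      simp only [Complex.ofReal_zero, mul_zero, zero_add]
      intro h
      have := congrArg Complex.re h
      simp at this
      try { have hm : (m : ℝ) ≥ 0 := Nat.cast_nonneg m; nlinarith [this] }
  have h4 : ContinuousAt (fun z : ℝ => Complex.Gamma ((Complex.I * z + 2) / 2)) 0 := by
    apply (Complex.differentiableAt_Gamma _ ?_).continuousAt.comp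
    · fun_prop
    · intro m
      simp only [Complex.ofReal_zero, mul_zero, zero_add]
      intro h
      have := congrArg Complex.re h
      simp at this
      try { have hm : (m : ℝ) ≥ 0 := Nat.cast_nonneg m; nlinarith [this] }
  have h4ne : Complex.Gamma ((Complex.I * (0:ℝ) + 2) / 2) ≠ 0 := by
    have : ((Complex.I * (0:ℝ) + 2) / 2) = 1 := by norm_num
    rw [this, Complex.Gamma_one]
    norm_num
  have : ContinuousAt (fun z : ℝ =>
      2 * (Complex.Gamma ((1 - Complex.I * z) / 2) *
          (Complex.Gamma (-(Complex.I * z) / 2))⁻¹) *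
        (Complex.Gamma ((Complex.I * z + 3) / 2) / Complex.Gamma ((Complex.I * z + 2) / 2))) 0 :=
    (continuousAt_const.mul (h1.mul h2)).mul (h3.div h4 h4ne)
  have heq : gammaSide = (fun z : ℝ =>
      2 * (Complex.Gamma ((1 - Complex.I * z) / 2) *
          (Complex.Gamma (-(Complex.I * z) / 2))⁻¹) *
        (Complex.Gamma ((Complex.I * z + 3) / 2) / Complex.Gamma ((Complex.I * z + 2) / 2))) := by
    funext z
    simp [gammaSide, div_eq_mul_inv]
  rw [heq]
  exact this

/-- The characteristic exponent `Ψ(z) = (z − i) tanh(πz/2)` of the Lévy process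
underlying the radial 3-dimensional Cauchy process, expressed via Gamma functions:
the identity holds for `z ≠ 0`, and the Gamma side extends by continuity to `0` at `z = 0`,
matching `Ψ(0) = 0`. -/
theorem gamma_identity_char_exponent :
    (∀ z : ℝ, z ≠ 0 →
        gammaSide z = ((z : ℂ) - Complex.I) * Complex.tanh (Real.pi * z / 2)) ∧
    Tendsto gammaSide (nhdsWithin 0 {(0 : ℝ)}ᶜ) (nhds 0) ∧
    ((0 : ℂ) - Complex.I) * Complex.tanh (Real.pi * 0 / 2) = 0 := by
  refine ⟨?_, ?_, by simp⟩
  · intro z hz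
    set w : ℂ := Complex.I * z with hw
    set c : ℝ := Real.pi * z / 2 with hc
    have hzim : w.im = z := by simp [hw]
    have hwre : w.re = 0 := by simp [hw]
    -- nonvanishing of relevant Gammas
    have hb : Complex.Gamma (-w / 2) ≠ 0 := by
      apply Complex.Gamma_ne_zero
      intro m h
      have := congrArg Complex.im h
      simp [hwre, hzim] at this
      exact hz (by linarith)
    have hg2 : Complex.Gamma ((w + 2) / 2) ≠ 0 := by
      apply Complex.Gamma_ne_zero_of_re_pos
      simp [Complex.div_re, hwre]
      try norm_num
    -- recursion for Gamma((w+3)/2)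
    have hrec : Complex.Gamma ((w + 3) / 2) = ((w + 1) / 2) * Complex.Gamma ((w + 1) / 2) := by
      have h0 : (w + 1) / 2 ≠ 0 := by
        intro h
        have := congrArg Complex.re h
        simp [Complex.div_re, hwre] at this
      have := Complex.Gamma_add_one ((w + 1) / 2) h0
      rw [show (w + 1) / 2 + 1 = (w + 3) / 2 by ring] at this
      exact this
    -- reflection formulas
    have hB : Complex.Gamma ((1 + w) / 2) * Complex.Gamma (1 - (1 + w) / 2) =
        (Real.pi : ℂ) / Complex.sin ((Real.pi : ℂ) * ((1 + w) / 2)) :=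
      Complex.Gamma_mul_Gamma_one_sub _
    have hC : Complex.Gamma (-w / 2) * Complex.Gamma (1 - (-w / 2)) =
        (Real.pi : ℂ) / Complex.sin ((Real.pi : ℂ) * (-w / 2)) :=
      Complex.Gamma_mul_Gamma_one_sub _
    -- trig evaluations
    have hsinB : Complex.sin ((Real.pi : ℂ) * ((1 + w) / 2)) = Complex.cosh c := by
      have : (Real.pi : ℂ) * ((1 + w) / 2) = (Real.pi : ℂ) / 2 + (c : ℂ) * Complex.I := by
        push_cast [hw, hc]; ring
      rw [this, Complex.sin_add, Complex.sin_pi_div_two, Complex.cos_pi_div_two, Complex.cos_mul_I]; ring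
    have hsinC : Complex.sin ((Real.pi : ℂ) * (-w / 2)) = -(Complex.sinh c * Complex.I) := by
      have : (Real.pi : ℂ) * (-w / 2) = -((c : ℂ) * Complex.I) := by
        push_cast [hw, hc]; ring
      rw [this, Complex.sin_neg, Complex.sin_mul_I]
    have hcosh : Complex.cosh (c : ℂ) ≠ 0 := by
      rw [← Complex.ofReal_cosh]
      exact_mod_cast (Real.cosh_pos (x := c)).ne'
    have hsinh : Complex.sinh (c : ℂ) ≠ 0 := by
      rw [← Complex.ofReal_sinh]
      have : Real.sinh c ≠ 0 := by
        rw [Real.sinh_ne_zero, hc]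
        positivity
      exact_mod_cast this
    rw [hsinB] at hB
    rw [hsinC] at hC
    have h1sub : (1 : ℂ) - (1 + w) / 2 = (1 - w) / 2 := by ring
    have h1sub' : (1 : ℂ) - (-w / 2) = (w + 2) / 2 := by ring
    rw [h1sub] at hB
    rw [h1sub'] at hC
    have harg : ((Real.pi : ℂ) * z / 2) = (c : ℂ) := by push_cast [hc]; ring
    have htanh : Complex.tanh ((Real.pi : ℂ) * z / 2) =
        Complex.sinh c / Complex.cosh c := by
      rw [harg, Complex.tanh_eq_sinh_div_cosh]
    -- now put everything together
    have hpi : (Real.pi : ℂ) ≠ 0 := by exact_mod_cast Real.pi_ne_zero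
    have key : Complex.Gamma ((1 - w) / 2) * Complex.Gamma ((1 + w) / 2) *
        (Complex.Gamma (-w / 2) * Complex.Gamma ((w + 2) / 2)) ≠ 0 → True := fun _ => trivial
    unfold gammaSide
    rw [← hw, hrec, htanh]
    have hIne : -(Complex.sinh (c:ℂ) * Complex.I) ≠ 0 := by
      simp [Complex.I_ne_zero, hsinh]
    -- From hB : Γ((1+w)/2) * Γ((1-w)/2) = π / cosh c
    -- From hC : Γ(-w/2) * Γ((w+2)/2) = π / (-(sinh c * I))
    have hBval : Complex.Gamma ((1 + w) / 2) * Complex.Gamma ((1 - w) / 2) =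
        (Real.pi : ℂ) / Complex.cosh c := hB
    have hCval : Complex.Gamma (-w / 2) * Complex.Gamma ((w + 2) / 2) =
        (Real.pi : ℂ) / (-(Complex.sinh c * Complex.I)) := hC
    have hane : Complex.Gamma ((1 + w) / 2) ≠ 0 := by
      apply Complex.Gamma_ne_zero_of_re_pos
      simp [Complex.div_re, hwre]
      try norm_num
    -- express Γ((1-w)/2) and Γ((w+2)/2) from the products
    have hA : Complex.Gamma ((1 - w) / 2) =
        (Real.pi : ℂ) / Complex.cosh c / Complex.Gamma ((1 + w) / 2) := by
      field_simp at hBval ⊢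
      linear_combination hBval
    have hG2 : Complex.Gamma ((w + 2) / 2) =
        (Real.pi : ℂ) / (-(Complex.sinh c * Complex.I)) / Complex.Gamma (-w / 2) := by
      rw [eq_div_iff hb, mul_comm]
      exact hCval
    rw [hA, hG2]
    have hwz : w = Complex.I * z := hw
    field_simp
    rw [hwz]
    ring_nf
    rw [Complex.I_sq]
    ring
    have hb' : Complex.Gamma (-(Complex.I * z / 2)) ≠ 0 := by
      convert hb using 2; rw [hwz]; ring
    field_simp
  · exact tendsto_nhdsWithin_of_tendsto_nhds (gammaSide_zero ▸ gammaSide_contAt.tendsto)
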